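/- For real ω, |1 − 2φ₁(iω)| can be both less than 1 and greater than 1: specifically, 1 − 2φ₁(0) = −1 (modulus 1), and there exists ω ≠ 0 with |1 − 2φ₁(iω)| > 1, where φ₁(iω) = (e^{iω} − 1)/(iω). -/

import Mathlib

/-- The stiff slow limit of the MRI trapezoidal stability function with purely
imaginary fast eigenvalue: 1 − 2φ₁(0) = −1 has modulus 1, and there is ω ≠ 0 with
|1 − 2φ₁(iω)| > 1. -/
theorem mri_trapezoidal_not_unconditionally_stable (φ1 : ℂ → ℂ)
    (h1 : ∀ z : ℂ, z ≠ 0 → φ1 z = (Complex.exp z - 1) / z)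
    (h0 : φ1 0 = 1) :
    (1 - 2 * φ1 0 = -1) ∧
    ‖1 - 2 * φ1 0‖ = 1 ∧
    ∃ ω : ℝ, ω ≠ 0 ∧ 1 < ‖1 - 2 * φ1 (Complex.I * ω)‖ := by
  refine ⟨by rw [h0]; ring, by rw [h0]; norm_num, Real.pi, Real.pi_ne_zero, ?_⟩
  have hπ : (Real.pi : ℂ) ≠ 0 := by
    exact_mod_cast Complex.ofReal_ne_zero.mpr Real.pi_ne_zero
  have hz : (Complex.I * Real.pi) ≠ 0 := mul_ne_zero Complex.I_ne_zero hπ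
  rw [h1 _ hz]
  have hexp : Complex.exp (Complex.I * Real.pi) = -1 := by
    rw [mul_comm]; exact Complex.exp_pi_mul_I
  have key : (1 : ℂ) - 2 * ((Complex.exp (Complex.I * Real.pi) - 1) / (Complex.I * Real.pi))
      = 1 - (4 / Real.pi) * Complex.I := by
    rw [hexp]
    field_simp
    ring_nf
    simp [Complex.I_sq]
    ring
  rw [key]
  have him : ((1 : ℂ) - (4 / Real.pi) * Complex.I).im = -(4 / Real.pi) := by simp
  have h4 : (1 : ℝ) < 4 / Real.pi := by
    rw [lt_div_iff₀ Real.pi_pos]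
    linarith [Real.pi_lt_d2]
  calc (1 : ℝ) < 4 / Real.pi := h4
    _ = |((1 : ℂ) - (4 / Real.pi) * Complex.I).im| := by
        rw [him, abs_neg, abs_of_pos (by positivity)]
    _ ≤ _ := Complex.abs_im_le_norm _
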